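/- arXiv:1910.01498 — 3 statements merged into one kernel-verified Lean document; each statement's English description precedes it below -/
import Mathlib

section
/- Let a ∈ Sⁿ with aᵀe_{n+1} < cos θ for some θ ∈ (0, π/2), and define c = J_n a / (cos θ - e_{n+1}ᵀa) ∈ ℝⁿ and r = sin θ / (cos θ - e_{n+1}ᵀa) > 0, where J_n a denotes the first n coordinates of a. Then the stereographic projection ψ maps the open spherical cap O = {x ∈ Sⁿ : xᵀa > cos θ} onto the open Euclidean ball {ξ ∈ ℝⁿ : ‖ξ - c‖ < r}. -/
open scoped BigOperators

/-- Stereographic projection from the north pole. -/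
noncomputable def stereo (n : ℕ) (x : EuclideanSpace ℝ (Fin (n + 1))) :
    EuclideanSpace ℝ (Fin n) :=
  WithLp.toLp 2 (fun i : Fin n => x i.castSucc / (1 - x (Fin.last n)))

lemma sum_sq_of_norm_one {m : ℕ} (a : EuclideanSpace ℝ (Fin m)) (ha : ‖a‖ = 1) :
    ∑ i, a i ^ 2 = 1 := by
  have h := congrArg (· ^ 2) ha
  rw [EuclideanSpace.norm_eq] at h
  simp only [Real.norm_eq_abs, sq_abs] at h
  rw [Real.sq_sqrt (by positivity)] at h
  simpa using h

theorem stereo_image_cap (n : ℕ) (θ : ℝ) (hθ : θ ∈ Set.Ioo 0 (Real.pi / 2))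
    (a : EuclideanSpace ℝ (Fin (n + 1))) (ha : ‖a‖ = 1)
    (haN : a (Fin.last n) < Real.cos θ)
    (c : EuclideanSpace ℝ (Fin n))
    (hc : ∀ i, c i = a i.castSucc / (Real.cos θ - a (Fin.last n)))
    (r : ℝ) (hr : r = Real.sin θ / (Real.cos θ - a (Fin.last n))) :
    0 < r ∧
    stereo n '' {x : EuclideanSpace ℝ (Fin (n + 1)) |
        ‖x‖ = 1 ∧ (∑ i, x i * a i) > Real.cos θ} =
      {ξ : EuclideanSpace ℝ (Fin n) | ‖ξ - c‖ < r} := by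
  set aN := a (Fin.last n) with haNdef
  have hd : 0 < Real.cos θ - aN := by linarith
  have hd0 : Real.cos θ - aN ≠ 0 := ne_of_gt hd
  have hsin : 0 < Real.sin θ := Real.sin_pos_of_pos_of_lt_pi hθ.1
    (lt_trans hθ.2 (by linarith [Real.pi_pos]))
  have hrpos : 0 < r := by rw [hr]; positivity
  have ha2 : ∑ i, a i ^ 2 = 1 := sum_sq_of_norm_one a ha
  have haA : ∑ i : Fin n, a i.castSucc ^ 2 = 1 - aN ^ 2 := by
    rw [Fin.sum_univ_castSucc] at ha2; linarith
  -- key equivalence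
  have key : ∀ ξ : EuclideanSpace ℝ (Fin n), ‖ξ - c‖ < r ↔
      (Real.cos θ - aN) * (∑ i, ξ i ^ 2) - 2 * (∑ i, ξ i * a i.castSucc)
        + Real.cos θ + aN < 0 := by
    intro ξ
    rw [EuclideanSpace.norm_eq, Real.sqrt_lt' hrpos]
    have hsub : ∀ i, ‖(ξ - c) i‖ ^ 2 = (ξ i - c i) ^ 2 := by
      intro i
      simp [Real.norm_eq_abs, sq_abs]
    simp_rw [hsub, hc, hr]
    have expand : ∑ i, (ξ i - a i.castSucc / (Real.cos θ - aN)) ^ 2 =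
        (∑ i, ξ i ^ 2) - 2 * (∑ i, ξ i * a i.castSucc) / (Real.cos θ - aN)
          + (1 - aN ^ 2) / (Real.cos θ - aN) ^ 2 := by
      rw [← haA]
      rw [Finset.sum_div, Finset.mul_sum, Finset.sum_div]
      rw [← Finset.sum_sub_distrib, ← Finset.sum_add_distrib]
      apply Finset.sum_congr rfl
      intro i _
      field_simp
      ring
    have hsq : Real.sin θ ^ 2 = 1 - Real.cos θ ^ 2 := by
      have := Real.sin_sq_add_cos_sq θ; linarith
    rw [expand, div_pow, hsq]
    have hid : (∑ i, ξ i ^ 2) - 2 * (∑ i, ξ i * a i.castSucc) / (Real.cos θ - aN)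
        + (1 - aN ^ 2) / (Real.cos θ - aN) ^ 2
        - (1 - Real.cos θ ^ 2) / (Real.cos θ - aN) ^ 2
        = ((Real.cos θ - aN) * (∑ i, ξ i ^ 2) - 2 * (∑ i, ξ i * a i.castSucc)
            + Real.cos θ + aN) / (Real.cos θ - aN) := by
      field_simp
      ring
    rw [← sub_neg, hid, div_lt_iff₀ hd, zero_mul]
  refine ⟨hrpos, ?_⟩
  ext ξ
  simp only [Set.mem_image, Set.mem_setOf_eq]
  rw [key ξ]
  constructor
  · rintro ⟨x, ⟨hx1, hx2⟩, rfl⟩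
    set t := x (Fin.last n) with htdef
    have hx2' : ∑ i, x i * a i > Real.cos θ := hx2
    have hxs : ∑ i, x i ^ 2 = 1 := sum_sq_of_norm_one x hx1
    have hxP : ∑ i : Fin n, x i.castSucc ^ 2 = 1 - t ^ 2 := by
      rw [Fin.sum_univ_castSucc] at hxs; linarith
    have hxT : ∑ i : Fin n, x i.castSucc * a i.castSucc =
        (∑ i, x i * a i) - t * aN := by
      rw [Fin.sum_univ_castSucc]; simp only [htdef, haNdef]; ring
    have hnn : (0:ℝ) ≤ ∑ i : Fin n, x i.castSucc ^ 2 :=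
      Finset.sum_nonneg fun i _ => sq_nonneg _
    have ht : t < 1 := by
      have hle : t ≤ 1 := by nlinarith [sq_nonneg (t - 1), sq_nonneg (t + 1)]
      rcases lt_or_eq_of_le hle with h | h
      · exact h
      · exfalso
        have hP0 : ∑ i : Fin n, x i.castSucc ^ 2 = 0 := by rw [hxP, h]; ring
        have hzero : ∀ i : Fin n, x i.castSucc = 0 := by
          intro i
          have := (Finset.sum_eq_zero_iff_of_nonneg
            (fun i _ => sq_nonneg (x i.castSucc))).mp hP0 i (Finset.mem_univ i)
          exact (pow_eq_zero_iff (by norm_num)).mp this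
        have hMe : ∑ i, x i * a i = aN := by
          rw [Fin.sum_univ_castSucc,
            Finset.sum_eq_zero (fun i _ => by rw [hzero i]; ring), ← htdef, h,
            ← haNdef]
          ring
        linarith [hx2']
    have h1t : 0 < 1 - t := by linarith
    have hQ : ∑ i : Fin n, (stereo n x) i ^ 2 = (1 - t ^ 2) / (1 - t) ^ 2 := by
      simp only [stereo, PiLp.toLp_apply, ← htdef]
      rw [← hxP, Finset.sum_div]
      exact Finset.sum_congr rfl fun i _ => by rw [div_pow]
    have hS : ∑ i : Fin n, (stereo n x) i * a i.castSucc =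
        ((∑ i, x i * a i) - t * aN) / (1 - t) := by
      simp only [stereo, PiLp.toLp_apply, ← htdef]
      rw [← hxT, Finset.sum_div]
      exact Finset.sum_congr rfl fun i _ => by rw [div_mul_eq_mul_div]
    rw [hQ, hS]
    have hid2 : (Real.cos θ - aN) * ((1 - t ^ 2) / (1 - t) ^ 2)
        - 2 * (((∑ i, x i * a i) - t * aN) / (1 - t)) + Real.cos θ + aN
        = 2 * (Real.cos θ - ∑ i, x i * a i) / (1 - t) := by
      field_simp
      ring
    rw [hid2]
    exact div_neg_of_neg_of_pos (by linarith) h1t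
  · intro hξ
    set Q := ∑ i, ξ i ^ 2 with hQdef
    have hQ0 : 0 ≤ Q := Finset.sum_nonneg fun i _ => sq_nonneg _
    have hQ1 : 0 < Q + 1 := by linarith
    have hQ1' : Q + 1 ≠ 0 := ne_of_gt hQ1
    refine ⟨(WithLp.toLp 2 (fun i => Fin.lastCases ((Q - 1) / (Q + 1))
      (fun j => 2 * ξ j / (Q + 1)) i) : EuclideanSpace ℝ (Fin (n + 1))), ⟨?_, ?_⟩, ?_⟩
    · rw [EuclideanSpace.norm_eq, Real.sqrt_eq_one]
      simp only [Real.norm_eq_abs, sq_abs]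
      rw [Fin.sum_univ_castSucc]
      simp only [PiLp.toLp_apply, Fin.lastCases_castSucc, Fin.lastCases_last]
      have hsum : ∑ i : Fin n, (2 * ξ i / (Q + 1)) ^ 2 = 4 * Q / (Q + 1) ^ 2 := by
        rw [hQdef, Finset.mul_sum, Finset.sum_div]
        exact Finset.sum_congr rfl fun i _ => by field_simp; ring
      rw [hsum]
      field_simp
      ring
    · rw [Fin.sum_univ_castSucc]
      simp only [PiLp.toLp_apply, Fin.lastCases_castSucc, Fin.lastCases_last]
      have hsum : ∑ i : Fin n, (2 * ξ i / (Q + 1)) * a i.castSucc =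
          2 * (∑ i, ξ i * a i.castSucc) / (Q + 1) := by
        rw [Finset.mul_sum, Finset.sum_div]
        exact Finset.sum_congr rfl fun i _ => by field_simp
      rw [hsum, ← haNdef]
      rw [gt_iff_lt, ← sub_pos]
      have hid3 : 2 * (∑ i, ξ i * a i.castSucc) / (Q + 1) + (Q - 1) / (Q + 1) * aN
          - Real.cos θ = -((Real.cos θ - aN) * Q - 2 * (∑ i, ξ i * a i.castSucc)
            + Real.cos θ + aN) / (Q + 1) := by
        field_simp
        ring
      rw [hid3]
      apply div_pos _ hQ1
      linarith [hξ]
    · ext i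
      simp only [stereo, PiLp.toLp_apply, Fin.lastCases_castSucc, Fin.lastCases_last]
      have h2 : 1 - (Q - 1) / (Q + 1) = 2 / (Q + 1) := by field_simp; ring
      rw [h2]
      rw [div_div_div_cancel_right₀]
      · field_simp
      · exact hQ1'
end

section
/- Let a ∈ Sⁿ with aᵀe_{n+1} < cos θ, θ ∈ (0, π/2), and let c = J_n a/(cos θ - e_{n+1}ᵀa), r = sin θ/(cos θ - e_{n+1}ᵀa). Then for every x ∈ Sⁿ \ {e_{n+1}} with xᵀa > cos θ, the identity ‖ψ(x) - c‖² = r² - 2(xᵀa - cos θ)/((cos θ - e_{n+1}ᵀa)(1 - e_{n+1}ᵀx)) holds; in particular ‖ψ(x) - c‖ < r. -/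
open scoped BigOperators

/-- The north pole `e_{n+1}`. -/
noncomputable def northPole (n : ℕ) : EuclideanSpace ℝ (Fin (n + 1)) :=
  EuclideanSpace.single (Fin.last n) (1 : ℝ)

lemma norm_sq_eucl {m : ℕ} (y : EuclideanSpace ℝ (Fin m)) :
    ‖y‖ ^ 2 = ∑ i, y i ^ 2 := by
  rw [EuclideanSpace.norm_eq, Real.sq_sqrt (Finset.sum_nonneg fun i _ => sq_nonneg _)]
  simp [Real.norm_eq_abs, sq_abs]

theorem stereo_cap_identity (n : ℕ) (θ : ℝ) (hθ : θ ∈ Set.Ioo 0 (Real.pi / 2))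
    (a : EuclideanSpace ℝ (Fin (n + 1))) (ha : ‖a‖ = 1)
    (haN : a (Fin.last n) < Real.cos θ)
    (c : EuclideanSpace ℝ (Fin n))
    (hc : ∀ i, c i = a i.castSucc / (Real.cos θ - a (Fin.last n)))
    (r : ℝ) (hr : r = Real.sin θ / (Real.cos θ - a (Fin.last n)))
    (x : EuclideanSpace ℝ (Fin (n + 1))) (hx : ‖x‖ = 1) (hne : x ≠ northPole n)
    (hxa : (∑ i, x i * a i) > Real.cos θ) :
    ‖stereo n x - c‖ ^ 2 =
        r ^ 2 - 2 * ((∑ i, x i * a i) - Real.cos θ) /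
          ((Real.cos θ - a (Fin.last n)) * (1 - x (Fin.last n))) ∧
    ‖stereo n x - c‖ < r := by
  obtain ⟨hθ0, hθ1⟩ := hθ
  set cθ := Real.cos θ with hcθ
  set al := a (Fin.last n) with hal
  set xl := x (Fin.last n) with hxl
  set S := ∑ i, x i * a i with hS
  have hτ : 0 < cθ - al := by linarith
  have hx2 : ∑ i, x i ^ 2 = 1 := by
    have h := norm_sq_eucl x; rw [hx] at h; linarith
  have ha2 : ∑ i, a i ^ 2 = 1 := by
    have h := norm_sq_eucl a; rw [ha] at h; linarith
  have hxl_le : xl ^ 2 ≤ 1 := by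
    rw [← hx2]
    exact Finset.single_le_sum (f := fun i => x i ^ 2) (fun i _ => sq_nonneg _) (Finset.mem_univ _)
  have hxl1 : xl ≤ 1 := by nlinarith
  have hxlt : xl < 1 := by
    rcases lt_or_eq_of_le hxl1 with h | h
    · exact h
    · exfalso
      have hrest : ∑ i : Fin n, x i.castSucc ^ 2 = 0 := by
        rw [Fin.sum_univ_castSucc] at hx2
        nlinarith [hx2, h]
      have hz : ∀ i : Fin n, x i.castSucc = 0 := by
        intro i
        have := (Finset.sum_eq_zero_iff_of_nonneg
          (fun i _ => sq_nonneg (x i.castSucc))).mp hrest i (Finset.mem_univ i)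
        exact pow_eq_zero_iff (by norm_num) |>.mp this
      apply hne
      ext i
      rcases eq_or_ne i (Fin.last n) with hi | hi
      · rw [hi]
        simp [northPole, EuclideanSpace.single_apply, ← h, hxl]
      · obtain ⟨j, rfl⟩ := Fin.exists_castSucc_eq.mpr hi
        simp [northPole, EuclideanSpace.single_apply, hi, hz j]
  have hs : 0 < 1 - xl := by linarith
  have hA : ∑ i : Fin n, x i.castSucc ^ 2 = 1 - xl ^ 2 := by
    rw [Fin.sum_univ_castSucc] at hx2; linarith
  have hB : ∑ i : Fin n, a i.castSucc ^ 2 = 1 - al ^ 2 := by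
    rw [Fin.sum_univ_castSucc] at ha2; linarith
  have hC : ∑ i : Fin n, x i.castSucc * a i.castSucc = S - xl * al := by
    rw [hS, Fin.sum_univ_castSucc]; ring
  have hnorm : ‖stereo n x - c‖ ^ 2 =
      ∑ i : Fin n, (x i.castSucc / (1 - xl) - a i.castSucc / (cθ - al)) ^ 2 := by
    rw [norm_sq_eucl]
    refine Finset.sum_congr rfl fun i _ => ?_
    simp [stereo, hc i, hxl, hal, hcθ]
  have key : ‖stereo n x - c‖ ^ 2 =
      r ^ 2 - 2 * (S - cθ) / ((cθ - al) * (1 - xl)) := by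
    have expand : ∀ i : Fin n,
        (x i.castSucc / (1 - xl) - a i.castSucc / (cθ - al)) ^ 2 =
        x i.castSucc ^ 2 * (1 / (1 - xl) ^ 2)
          - x i.castSucc * a i.castSucc * (2 / ((1 - xl) * (cθ - al)))
          + a i.castSucc ^ 2 * (1 / (cθ - al) ^ 2) := by
      intro i
      field_simp
      ring
    rw [hnorm]
    simp only [expand]
    rw [Finset.sum_add_distrib, Finset.sum_sub_distrib, ← Finset.sum_mul,
      ← Finset.sum_mul, ← Finset.sum_mul, hA, hB, hC, hr]
    have hsin : Real.sin θ ^ 2 = 1 - cθ ^ 2 := by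
      rw [hcθ, Real.sin_sq]
    rw [div_pow, hsin]
    field_simp
    ring
  refine ⟨key, ?_⟩
  have hpos : 0 < 2 * (S - cθ) / ((cθ - al) * (1 - xl)) := by
    apply div_pos (by linarith) (mul_pos hτ hs)
  have hrpos : 0 < r := by
    rw [hr]
    exact div_pos (Real.sin_pos_of_pos_of_lt_pi hθ0 (by linarith [Real.pi_pos])) hτ
  have hlt : ‖stereo n x - c‖ ^ 2 < r ^ 2 := by rw [key]; linarith
  nlinarith [norm_nonneg (stereo n x - c)]
end

section
/- For x on the unit 2-sphere, let Π(x) ∈ ℝ^{3×3} be the cross-product matrix (Π(x)u = x × u). Then for x ≠ e₃, the matrix Σ(x) = ∇ψ(x)Π(x) satisfies Σ(x)Σ(x)ᵀ = (1 - e₃ᵀx)⁻²·I₂, where ∇ψ(x) is the Jacobian of the stereographic projection from the north pole e₃. -/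
/-- Jacobian matrix of the stereographic projection at `x` (case `n = 2`). -/
noncomputable def stereoJacMat2 (x : EuclideanSpace ℝ (Fin 3)) :
    Matrix (Fin 2) (Fin 3) ℝ :=
  Matrix.of fun i j =>
    ((1 - x (Fin.last 2)) * (if j = i.castSucc then 1 else 0) +
      x i.castSucc * (if j = Fin.last 2 then 1 else 0)) / (1 - x (Fin.last 2)) ^ 2

/-- Cross-product matrix: `(crossMat x) *ᵥ u = x × u`. -/
def crossMat (x : EuclideanSpace ℝ (Fin 3)) : Matrix (Fin 3) (Fin 3) ℝ :=
  !![0, -x 2, x 1; x 2, 0, -x 0; -x 1, x 0, 0]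

theorem sigma_sigma_transpose (x : EuclideanSpace ℝ (Fin 3))
    (hx : ‖x‖ = 1) (hne : x ≠ EuclideanSpace.single (Fin.last 2) (1 : ℝ)) :
    (stereoJacMat2 x * crossMat x) * Matrix.transpose (stereoJacMat2 x * crossMat x) =
      ((1 - x 2) ^ 2)⁻¹ • (1 : Matrix (Fin 2) (Fin 2) ℝ) := by
  have h1 : x 0 ^ 2 + x 1 ^ 2 + x 2 ^ 2 = 1 := by
    have h2 := hx
    rw [EuclideanSpace.norm_eq] at h2
    have h4 : (∑ i : Fin 3, ‖x i‖ ^ 2) = 1 := Real.sqrt_eq_one.mp h2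
    simpa [Fin.sum_univ_three, Real.norm_eq_abs, sq_abs] using h4
  have hx2 : x 2 ≠ 1 := by
    intro h
    apply hne
    have h0 : x 0 = 0 := by nlinarith [sq_nonneg (x 0), sq_nonneg (x 1)]
    have h1' : x 1 = 0 := by nlinarith [sq_nonneg (x 0), sq_nonneg (x 1)]
    ext i
    fin_cases i <;> simp [EuclideanSpace.single_apply, h0, h1', h, Fin.last]
  have hd : (1 : ℝ) - x 2 ≠ 0 := sub_ne_zero.mpr (Ne.symm hx2)
  have hd2 : ((1 : ℝ) - x 2) ^ 2 ≠ 0 := pow_ne_zero _ hd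
  set S0 : Matrix (Fin 2) (Fin 3) ℝ := !![1 - x 2, 0, x 0; 0, 1 - x 2, x 1] with hS0
  have hS : stereoJacMat2 x = (((1 - x 2) ^ 2)⁻¹ : ℝ) • S0 := by
    ext i j
    fin_cases i <;> fin_cases j <;>
      simp [stereoJacMat2, hS0, Fin.last, Fin.ext_iff, div_eq_inv_mul]
  have key : (S0 * crossMat x) * (S0 * crossMat x).transpose =
      ((1 - x 2) ^ 2) • (1 : Matrix (Fin 2) (Fin 2) ℝ) := by
    ext i j
    fin_cases i <;> fin_cases j <;>
      simp [hS0, crossMat, Matrix.mul_apply, Fin.sum_univ_three, Matrix.one_apply, Matrix.transpose, Matrix.vecHead, Matrix.of_apply]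
    · linear_combination ((1 - x 2) ^ 2 + x 0 ^ 2) * h1
    · linear_combination (x 0 * x 1) * h1
    · linear_combination (x 0 * x 1) * h1
    · linear_combination ((1 - x 2) ^ 2 + x 1 ^ 2) * h1
  rw [hS, Matrix.smul_mul, Matrix.transpose_smul, Matrix.smul_mul, Matrix.mul_smul,
    key, smul_smul, smul_smul]
  congr 1
  field_simp
end
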